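/- Let n ≥ 1, U ⊆ ℝⁿ open, J : ℝ → ℝ differentiable, and define h : U → ℝ by h(u) = J(|u|²). Let Y : U → ℝⁿ × ℝ ≅ ℝ^{n+1} be the inverse stereographic projection Y(u) = ( 2u, 1−|u|² )/( 1+|u|² ), let L = 4/(1+|u|²)², and define η : U → ℝ^{n+1} by η = Σᵢ (h_{,i}/L) Y_{,i} + h Y (that is, η = ∇_L h + hY). Then, writing t = |u|², η(u) = ( ( J'(t)(1−t) + 2J(t)/(1+t) ) u , −2t J'(t) + J(t)(1−t)/(1+t) ). -/

import Mathlib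

noncomputable section

/-- computation in Lemma 2.5: for a radial function h(u) = J(|u|²), the
hypersurface η = ∇_L h + hY, with Y the inverse stereographic projection and
L = 4/(1+|u|²)², is given by
η(u) = ((J'(t)(1−t) + 2J(t)/(1+t))·u, −2tJ'(t) + J(t)(1−t)/(1+t)), t = |u|². -/
theorem stmt_14 (n : ℕ) (hn : 1 ≤ n)
    (U : Set (EuclideanSpace ℝ (Fin n))) (hU : IsOpen U)
    (J : ℝ → ℝ) (hJ : Differentiable ℝ J) :
    let h : EuclideanSpace ℝ (Fin n) → ℝ := fun u => J (‖u‖ ^ 2)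
    let Y : EuclideanSpace ℝ (Fin n) → EuclideanSpace ℝ (Fin n) × ℝ := fun u =>
      ((2 / (1 + ‖u‖ ^ 2)) • u, (1 - ‖u‖ ^ 2) / (1 + ‖u‖ ^ 2))
    let L : EuclideanSpace ℝ (Fin n) → ℝ := fun u => 4 / (1 + ‖u‖ ^ 2) ^ 2
    let η : EuclideanSpace ℝ (Fin n) → EuclideanSpace ℝ (Fin n) × ℝ := fun u =>
      (∑ i : Fin n,
        (fderiv ℝ h u (EuclideanSpace.single i 1) / L u) •
          fderiv ℝ Y u (EuclideanSpace.single i 1)) + h u • Y u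
    ∀ u ∈ U,
      η u = ((deriv J (‖u‖ ^ 2) * (1 - ‖u‖ ^ 2) + 2 * J (‖u‖ ^ 2) / (1 + ‖u‖ ^ 2)) • u,
             -2 * ‖u‖ ^ 2 * deriv J (‖u‖ ^ 2)
               + J (‖u‖ ^ 2) * ((1 - ‖u‖ ^ 2) / (1 + ‖u‖ ^ 2))) := by
  intro h Y L η u hu
  have ht0 : (0:ℝ) ≤ ‖u‖ ^ 2 := by positivity
  have ht1 : (1:ℝ) + ‖u‖ ^ 2 ≠ 0 := by positivity
  set t := ‖u‖ ^ 2 with htdef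
  have hN : HasFDerivAt (fun x : EuclideanSpace ℝ (Fin n) => ‖x‖ ^ 2)
      (2 • innerSL ℝ u) u := (hasStrictFDerivAt_norm_sq u).hasFDerivAt
  have hh : HasFDerivAt h ((deriv J t) • (2 • innerSL ℝ u)) u :=
    (hJ t).hasDerivAt.comp_hasFDerivAt u hN
  have hc0 : HasDerivAt (fun s : ℝ => 2 / (1 + s)) (-2 / (1 + t) ^ 2) t := by
    have h1 : HasDerivAt (fun s : ℝ => 1 + s) 1 t := by
      exact (hasDerivAt_id t).const_add (1:ℝ)
    have := (hasDerivAt_const t (2:ℝ)).div h1 ht1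
    refine this.congr_deriv ?_
    ring
  have hg0 : HasDerivAt (fun s : ℝ => (1 - s) / (1 + s)) (-2 / (1 + t) ^ 2) t := by
    have h1 : HasDerivAt (fun s : ℝ => 1 + s) 1 t := by
      exact (hasDerivAt_id t).const_add (1:ℝ)
    have h2 : HasDerivAt (fun s : ℝ => 1 - s) (-1) t := by
      exact (hasDerivAt_id t).const_sub (1:ℝ)
    have := h2.div h1 ht1
    refine this.congr_deriv ?_
    field_simp
    ring
  have hc : HasFDerivAt (fun x : EuclideanSpace ℝ (Fin n) => 2 / (1 + ‖x‖ ^ 2))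
      ((-2 / (1 + t) ^ 2) • (2 • innerSL ℝ u)) u := hc0.comp_hasFDerivAt (f := fun x : EuclideanSpace ℝ (Fin n) => ‖x‖ ^ 2) u hN
  have hg : HasFDerivAt (fun x : EuclideanSpace ℝ (Fin n) => (1 - ‖x‖ ^ 2) / (1 + ‖x‖ ^ 2))
      ((-2 / (1 + t) ^ 2) • (2 • innerSL ℝ u)) u := hg0.comp_hasFDerivAt (f := fun x : EuclideanSpace ℝ (Fin n) => ‖x‖ ^ 2) u hN
  have hf1 : HasFDerivAt (fun x : EuclideanSpace ℝ (Fin n) => (2 / (1 + ‖x‖ ^ 2)) • x)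
      ((2 / (1 + t)) • ContinuousLinearMap.id ℝ (EuclideanSpace ℝ (Fin n))
        + ((-2 / (1 + t) ^ 2) • (2 • innerSL ℝ u)).smulRight u) u :=
    hc.smul (hasFDerivAt_id u)
  have hY : HasFDerivAt Y
      (((2 / (1 + t)) • ContinuousLinearMap.id ℝ (EuclideanSpace ℝ (Fin n))
        + ((-2 / (1 + t) ^ 2) • (2 • innerSL ℝ u)).smulRight u).prod
       ((-2 / (1 + t) ^ 2) • (2 • innerSL ℝ u))) u := hf1.prodMk hg
  have ht : t = ∑ i, u i * u i := by
    rw [htdef, ← real_inner_self_eq_norm_sq]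
    simp only [PiLp.inner_apply, RCLike.inner_apply, conj_trivial]
  have hbasis : ∑ i : Fin n, u i • EuclideanSpace.single i (1:ℝ) = u := by
    ext j
    rw [WithLp.ofLp_sum]
    simp [EuclideanSpace.single_apply, Pi.single_apply]
  show (∑ i : Fin n,
      (fderiv ℝ h u (EuclideanSpace.single i 1) / L u) •
        fderiv ℝ Y u (EuclideanSpace.single i 1)) + h u • Y u = _
  rw [hh.fderiv, hY.fderiv]
  refine Prod.ext ?_ ?_
  · show (_ : EuclideanSpace ℝ (Fin n)) = _
    simp only [Prod.fst_add, Prod.fst_sum, Prod.smul_fst, ContinuousLinearMap.prod_apply,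
      ContinuousLinearMap.add_apply, ContinuousLinearMap.smul_apply,
      ContinuousLinearMap.coe_smul', ContinuousLinearMap.id_apply,
      ContinuousLinearMap.smulRight_apply, innerSL_apply_apply, Pi.smul_apply,
      EuclideanSpace.inner_single_right, conj_trivial, mul_one, one_mul, nsmul_eq_mul,
      Nat.cast_ofNat, Prod.smul_mk, smul_eq_mul, L, h, Y]
    rw [← htdef]
    have hsum : ∑ x : Fin n, (deriv J t * (2 * u x) / (4 / (1 + t) ^ 2)) •
        ((2 / (1 + t)) • EuclideanSpace.single x (1:ℝ) + (-2 / (1 + t) ^ 2 * (2 * u x)) • u)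
        = (deriv J t * (1 + t)) • u + (-2 * deriv J t * t) • u := by
      simp only [smul_add, smul_smul]
      rw [Finset.sum_add_distrib]
      congr 1
      · conv_rhs => rw [← hbasis, Finset.smul_sum]
        refine Finset.sum_congr rfl fun i _ => ?_
        rw [smul_smul]
        congr 1
        field_simp
        ring
      · rw [← Finset.sum_smul]
        congr 1
        have key : ∀ i : Fin n, deriv J t * (2 * u i) / (4 / (1 + t) ^ 2) *
            (-2 / (1 + t) ^ 2 * (2 * u i)) = -2 * deriv J t * (u i * u i) := by
          intro i; field_simp; ring
        rw [Finset.sum_congr rfl fun i _ => key i, ← Finset.mul_sum, ← ht]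
    rw [hsum, smul_smul, ← add_smul, ← add_smul]
    congr 1
    field_simp
    ring
  · show (_ : ℝ) = _
    simp only [Prod.snd_add, Prod.snd_sum, Prod.smul_snd, ContinuousLinearMap.prod_apply,
      ContinuousLinearMap.smul_apply, innerSL_apply_apply,
      EuclideanSpace.inner_single_right, conj_trivial, mul_one, one_mul, nsmul_eq_mul,
      Nat.cast_ofNat, smul_eq_mul, L, h, Y]
    rw [← htdef]
    have hsum : ∑ x : Fin n, deriv J t * (2 * u x) / (4 / (1 + t) ^ 2) *
        (-2 / (1 + t) ^ 2 * (2 * u x)) = -2 * deriv J t * t := by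
      have key : ∀ i : Fin n, deriv J t * (2 * u i) / (4 / (1 + t) ^ 2) *
          (-2 / (1 + t) ^ 2 * (2 * u i)) = -2 * deriv J t * (u i * u i) := by
        intro i; field_simp; ring
      rw [Finset.sum_congr rfl fun i _ => key i, ← Finset.mul_sum, ← ht]
    rw [hsum]
    ring
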